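/- Define Φ(x₁, x₂, y₁, y₂) = y₂(1 + x₁) + ((2x₁ + x₁²)y₁ + (x₂ + x₁x₂)y₁²)/(1 + x₁ + x₂y₁) for (x₁, x₂, y₁, y₂) ∈ ℝ⁴ with 1 + x₁ + x₂y₁ ≠ 0. Then for all x₁, x₂, y₁, y₂ with |x₁|, |x₂| ≤ 0.1 and |y₁|, |y₂| ≤ 1: the first and second partial derivatives of Φ with respect to y₁ equal ∂Φ/∂y₁ = (1 + x₁)(x₁² + 2x₁ + 2x₂(1 + x₁)y₁ + x₂²y₁²)/(1 + x₁ + x₂y₁)² and ∂²Φ/∂y₁² = 2(1 + x₁)x₂/(1 + x₁ + x₂y₁)³; moreover there is an absolute constant C ≥ 1 such that C^{−1}·max(|x₁|, |x₂|) ≤ |∂Φ/∂y₁| + |∂²Φ/∂y₁²| ≤ C·max(|x₁|, |x₂|). -/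

import Mathlib

noncomputable section

/-- The defining function
`Φ(x₁,x₂,y₁,y₂) = y₂(1+x₁) + ((2x₁+x₁²)y₁ + (x₂+x₁x₂)y₁²)/(1+x₁+x₂y₁)`
(defined by this formula wherever the denominator is nonzero). -/
noncomputable def Phi (x₁ x₂ y₁ y₂ : ℝ) : ℝ :=
  y₂ * (1 + x₁) + ((2 * x₁ + x₁ ^ 2) * y₁ + (x₂ + x₁ * x₂) * y₁ ^ 2) / (1 + x₁ + x₂ * y₁)

lemma hasDeriv1 (x₁ x₂ y₂ y : ℝ) (hD : 1 + x₁ + x₂ * y ≠ 0) :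
    HasDerivAt (fun t => Phi x₁ x₂ t y₂)
      ((1 + x₁) * (x₁ ^ 2 + 2 * x₁ + 2 * x₂ * (1 + x₁) * y + x₂ ^ 2 * y ^ 2) /
        (1 + x₁ + x₂ * y) ^ 2) y := by
  have hD' : HasDerivAt (fun t : ℝ => 1 + x₁ + x₂ * t) x₂ y := by
    simpa using ((hasDerivAt_id y).const_mul x₂).const_add (1 + x₁)
  have hN : HasDerivAt (fun t : ℝ => (2 * x₁ + x₁ ^ 2) * t + (x₂ + x₁ * x₂) * t ^ 2)
      ((2 * x₁ + x₁ ^ 2) + (x₂ + x₁ * x₂) * (2 * y)) y := by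
    have h1 := (hasDerivAt_id y).const_mul (2 * x₁ + x₁ ^ 2)
    have h2 := (hasDerivAt_pow 2 y).const_mul (x₂ + x₁ * x₂)
    exact (h1.add h2).congr_deriv (by norm_num [pow_one])
  have hQ := hN.div hD' hD
  have h := (hQ.const_add (y₂ * (1 + x₁)))
  refine h.congr_deriv ?_
  field_simp
  ring

lemma hasDeriv2 (x₁ x₂ y : ℝ) (hD : 1 + x₁ + x₂ * y ≠ 0) :
    HasDerivAt (fun t => (1 + x₁) * (x₁ ^ 2 + 2 * x₁ + 2 * x₂ * (1 + x₁) * t + x₂ ^ 2 * t ^ 2) /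
        (1 + x₁ + x₂ * t) ^ 2)
      (2 * (1 + x₁) * x₂ / (1 + x₁ + x₂ * y) ^ 3) y := by
  have hD' : HasDerivAt (fun t : ℝ => 1 + x₁ + x₂ * t) x₂ y := by
    simpa using ((hasDerivAt_id y).const_mul x₂).const_add (1 + x₁)
  have hD2 : HasDerivAt (fun t : ℝ => (1 + x₁ + x₂ * t) ^ 2)
      (2 * (1 + x₁ + x₂ * y) ^ 1 * x₂) y := hD'.pow 2
  have hN : HasDerivAt
      (fun t : ℝ => (1 + x₁) * (x₁ ^ 2 + 2 * x₁ + 2 * x₂ * (1 + x₁) * t + x₂ ^ 2 * t ^ 2))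
      ((1 + x₁) * (2 * x₂ * (1 + x₁) + x₂ ^ 2 * (2 * y))) y := by
    have h3 := ((((hasDerivAt_id y).const_mul (2 * x₂ * (1 + x₁))).add
        ((hasDerivAt_pow 2 y).const_mul (x₂ ^ 2))).const_add (x₁ ^ 2 + 2 * x₁)).const_mul (1 + x₁)
    have hfun : (fun t : ℝ => (1 + x₁) * (x₁ ^ 2 + 2 * x₁ + 2 * x₂ * (1 + x₁) * t + x₂ ^ 2 * t ^ 2))
        = fun t : ℝ => (1 + x₁) * ((x₁ ^ 2 + 2 * x₁) + (2 * x₂ * (1 + x₁) * id t + x₂ ^ 2 * t ^ 2)) := by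
      funext t; simp only [id_eq]; ring
    rw [hfun]
    refine h3.congr_deriv ?_
    push_cast
    ring
  have h := hN.div hD2 (pow_ne_zero 2 hD)
  refine h.congr_deriv ?_
  field_simp
  ring

set_option maxHeartbeats 1600000 in
/-- on the region `|x₁|, |x₂| ≤ 0.1`, `|y₁|, |y₂| ≤ 1`, the first and
second partial derivatives of `Φ` in `y₁` are given by the stated formulas, and there is
an absolute constant `C ≥ 1` such that
`C⁻¹ max(|x₁|,|x₂|) ≤ |∂Φ/∂y₁| + |∂²Φ/∂y₁²| ≤ C max(|x₁|,|x₂|)`. -/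
theorem statement8 :
    ∃ C : ℝ, 1 ≤ C ∧
      ∀ x₁ x₂ y₁ y₂ : ℝ, |x₁| ≤ 0.1 → |x₂| ≤ 0.1 → |y₁| ≤ 1 → |y₂| ≤ 1 →
        deriv (fun y => Phi x₁ x₂ y y₂) y₁ =
          (1 + x₁) * (x₁ ^ 2 + 2 * x₁ + 2 * x₂ * (1 + x₁) * y₁ + x₂ ^ 2 * y₁ ^ 2) /
            (1 + x₁ + x₂ * y₁) ^ 2 ∧
        deriv (deriv (fun y => Phi x₁ x₂ y y₂)) y₁ =
          2 * (1 + x₁) * x₂ / (1 + x₁ + x₂ * y₁) ^ 3 ∧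
        C⁻¹ * max |x₁| |x₂| ≤
          |deriv (fun y => Phi x₁ x₂ y y₂) y₁| +
            |deriv (deriv (fun y => Phi x₁ x₂ y y₂)) y₁| ∧
        |deriv (fun y => Phi x₁ x₂ y y₂) y₁| +
            |deriv (deriv (fun y => Phi x₁ x₂ y y₂)) y₁| ≤
          C * max |x₁| |x₂| := by
  refine ⟨100, by norm_num, ?_⟩
  intro x₁ x₂ y₁ y₂ hx1 hx2 hy1 _hy2
  have hax1 := abs_le.mp hx1
  have hax2 := abs_le.mp hx2
  have hay1 := abs_le.mp hy1
  have habs : |x₂ * y₁| ≤ 0.1 := by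
    rw [abs_mul]
    calc |x₂| * |y₁| ≤ 0.1 * 1 := mul_le_mul hx2 hy1 (abs_nonneg y₁) (by norm_num)
    _ = 0.1 := by norm_num
  have hD8 : (0.8 : ℝ) ≤ 1 + x₁ + x₂ * y₁ := by
    have := neg_abs_le (x₂ * y₁); linarith [hax1.1]
  have hD12 : 1 + x₁ + x₂ * y₁ ≤ 1.2 := by
    have := le_abs_self (x₂ * y₁); linarith [hax1.2]
  have hDpos : (0:ℝ) < 1 + x₁ + x₂ * y₁ := by linarith
  have hDne : 1 + x₁ + x₂ * y₁ ≠ 0 := ne_of_gt hDpos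
  -- first derivative formula
  have h1 : deriv (fun y => Phi x₁ x₂ y y₂) y₁ =
      (1 + x₁) * (x₁ ^ 2 + 2 * x₁ + 2 * x₂ * (1 + x₁) * y₁ + x₂ ^ 2 * y₁ ^ 2) /
        (1 + x₁ + x₂ * y₁) ^ 2 := (hasDeriv1 x₁ x₂ y₂ y₁ hDne).deriv
  -- the derivative agrees with the closed formula on a neighborhood
  have hev : ∀ᶠ y in nhds y₁, 1 + x₁ + x₂ * y ≠ 0 := by
    have hc : ContinuousAt (fun y : ℝ => 1 + x₁ + x₂ * y) y₁ := by fun_prop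
    exact hc.eventually_ne hDne
  have heq : deriv (fun y => Phi x₁ x₂ y y₂) =ᶠ[nhds y₁]
      (fun y => (1 + x₁) * (x₁ ^ 2 + 2 * x₁ + 2 * x₂ * (1 + x₁) * y + x₂ ^ 2 * y ^ 2) /
        (1 + x₁ + x₂ * y) ^ 2) := by
    filter_upwards [hev] with y hy
    exact (hasDeriv1 x₁ x₂ y₂ y hy).deriv
  have h2 : deriv (deriv (fun y => Phi x₁ x₂ y y₂)) y₁ =
      2 * (1 + x₁) * x₂ / (1 + x₁ + x₂ * y₁) ^ 3 := by
    rw [heq.deriv_eq]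
    exact (hasDeriv2 x₁ x₂ y₁ hDne).deriv
  rw [h1, h2]
  clear h1 h2 heq hev
  have h1xl : (0.9 : ℝ) ≤ 1 + x₁ := by linarith [hax1.1]
  have h1xu : 1 + x₁ ≤ 1.1 := by linarith [hax1.2]
  have h1xpos : (0 : ℝ) < 1 + x₁ := by linarith
  obtain ⟨D, hDdef⟩ : ∃ d : ℝ, d = 1 + x₁ + x₂ * y₁ := ⟨_, rfl⟩
  rw [← hDdef] at hD8 hD12 hDpos hDne ⊢
  obtain ⟨I, hIdef⟩ : ∃ i : ℝ,
      i = x₁ ^ 2 + 2 * x₁ + 2 * x₂ * (1 + x₁) * y₁ + x₂ ^ 2 * y₁ ^ 2 := ⟨_, rfl⟩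
  rw [← hIdef]
  have hD2pos : (0 : ℝ) < D ^ 2 := by positivity
  have hD3pos : (0 : ℝ) < D ^ 3 := by positivity
  have hD2ub : D ^ 2 ≤ 1.44 := by
    calc D ^ 2 ≤ 1.2 ^ 2 := pow_le_pow_left₀ (le_of_lt hDpos) hD12 2
      _ = 1.44 := by norm_num
  have hD2lb : (0.64 : ℝ) ≤ D ^ 2 := by
    calc (0.64 : ℝ) = 0.8 ^ 2 := by norm_num
      _ ≤ D ^ 2 := pow_le_pow_left₀ (by norm_num) hD8 2
  have hD3ub : D ^ 3 ≤ 1.728 := by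
    calc D ^ 3 ≤ 1.2 ^ 3 := pow_le_pow_left₀ (le_of_lt hDpos) hD12 3
      _ = 1.728 := by norm_num
  have hD3lb : (0.512 : ℝ) ≤ D ^ 3 := by
    calc (0.512 : ℝ) = 0.8 ^ 3 := by norm_num
      _ ≤ D ^ 3 := pow_le_pow_left₀ (by norm_num) hD8 3
  have hE1 : |(1 + x₁) * I / D ^ 2| = (1 + x₁) * |I| / D ^ 2 := by
    rw [abs_div, abs_mul, abs_of_pos h1xpos, abs_of_pos hD2pos]
  have hE2 : |2 * (1 + x₁) * x₂ / D ^ 3| = 2 * (1 + x₁) * |x₂| / D ^ 3 := by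
    rw [abs_div, abs_of_pos hD3pos, abs_mul, abs_mul, abs_two, abs_of_pos h1xpos]
  -- bounds on |2x₁ + x₁²|
  have hq : |2 * x₁ + x₁ ^ 2| = |x₁| * |2 + x₁| := by
    rw [show 2 * x₁ + x₁ ^ 2 = x₁ * (2 + x₁) by ring, abs_mul]
  have h2x : |2 + x₁| = 2 + x₁ := abs_of_pos (by linarith [hax1.1])
  have hqub : |2 * x₁ + x₁ ^ 2| ≤ 2.1 * |x₁| := by
    rw [hq, h2x]
    nlinarith [mul_nonneg (abs_nonneg x₁) (by linarith [hax1.2] : (0:ℝ) ≤ 0.1 - x₁)]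
  have hqlb : 1.9 * |x₁| ≤ |2 * x₁ + x₁ ^ 2| := by
    rw [hq, h2x]
    nlinarith [mul_nonneg (abs_nonneg x₁) (by linarith [hax1.1] : (0:ℝ) ≤ 0.1 + x₁)]
  -- bound on the rest
  have hr1 : |2 * x₂ * (1 + x₁) * y₁| = 2 * |x₂| * (1 + x₁) * |y₁| := by
    rw [abs_mul, abs_mul, abs_mul, abs_two, abs_of_pos h1xpos]
  have hr2 : |x₂ ^ 2 * y₁ ^ 2| = x₂ ^ 2 * y₁ ^ 2 := abs_of_nonneg (by positivity)
  have hsq : x₂ ^ 2 * y₁ ^ 2 ≤ 0.1 * |x₂| * 1 := by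
    have e1 : x₂ ^ 2 ≤ 0.1 * |x₂| := by nlinarith [sq_abs x₂, abs_nonneg x₂]
    have e2 : y₁ ^ 2 ≤ 1 := by nlinarith [sq_abs y₁, abs_nonneg y₁]
    exact mul_le_mul e1 e2 (by positivity) (by positivity)
  have hr : |2 * x₂ * (1 + x₁) * y₁ + x₂ ^ 2 * y₁ ^ 2| ≤ 2.3 * |x₂| := by
    calc |2 * x₂ * (1 + x₁) * y₁ + x₂ ^ 2 * y₁ ^ 2|
        ≤ |2 * x₂ * (1 + x₁) * y₁| + |x₂ ^ 2 * y₁ ^ 2| := abs_add_le _ _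
      _ ≤ 2.3 * |x₂| := by
          rw [hr1, hr2]
          nlinarith [abs_nonneg x₂, abs_nonneg y₁,
            mul_le_mul (mul_le_mul_of_nonneg_left h1xu (by positivity : (0:ℝ) ≤ 2 * |x₂|))
              hy1 (abs_nonneg y₁) (by positivity)]
  -- bounds on |I|
  have hIub : |I| ≤ 2.1 * |x₁| + 2.3 * |x₂| := by
    calc |I| = |(2 * x₁ + x₁ ^ 2) + (2 * x₂ * (1 + x₁) * y₁ + x₂ ^ 2 * y₁ ^ 2)| := by
          rw [hIdef]; ring_nf
      _ ≤ |2 * x₁ + x₁ ^ 2| + |2 * x₂ * (1 + x₁) * y₁ + x₂ ^ 2 * y₁ ^ 2| := abs_add_le _ _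
      _ ≤ 2.1 * |x₁| + 2.3 * |x₂| := by linarith
  have hIlb : 1.9 * |x₁| - 2.3 * |x₂| ≤ |I| := by
    have key : |2 * x₁ + x₁ ^ 2| ≤ |I| + |2 * x₂ * (1 + x₁) * y₁ + x₂ ^ 2 * y₁ ^ 2| := by
      have h := abs_add_le I (-(2 * x₂ * (1 + x₁) * y₁ + x₂ ^ 2 * y₁ ^ 2))
      rw [abs_neg] at h
      calc |2 * x₁ + x₁ ^ 2| = |I + -(2 * x₂ * (1 + x₁) * y₁ + x₂ ^ 2 * y₁ ^ 2)| := by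
            rw [hIdef]; ring_nf
        _ ≤ _ := h
    linarith
  rw [hE1, hE2]
  obtain ⟨S1, hS1⟩ : ∃ s : ℝ, s = (1 + x₁) * |I| / D ^ 2 := ⟨_, rfl⟩
  obtain ⟨S2, hS2⟩ : ∃ s : ℝ, s = 2 * (1 + x₁) * |x₂| / D ^ 3 := ⟨_, rfl⟩
  rw [← hS1, ← hS2]
  have hS1nn : 0 ≤ S1 := by rw [hS1]; positivity
  have hS2nn : 0 ≤ S2 := by rw [hS2]; positivity
  have hb : |x₂| ≤ S2 := by
    rw [hS2, le_div_iff₀ hD3pos]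
    linarith [mul_le_mul_of_nonneg_left hD3ub (abs_nonneg x₂), abs_nonneg x₂,
      mul_nonneg (by linarith : (0:ℝ) ≤ 1 + x₁ - 0.9) (abs_nonneg x₂)]
  have hS1lb : 1.9 * |x₁| - 2.3 * |x₂| ≤ 1.6 * S1 := by
    have h : 0.625 * |I| ≤ S1 := by
      rw [hS1, le_div_iff₀ hD2pos]
      linarith [mul_le_mul_of_nonneg_left hD2ub (abs_nonneg I), abs_nonneg I,
        mul_nonneg (by linarith : (0:ℝ) ≤ 1 + x₁ - 0.9) (abs_nonneg I)]
    linarith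
  have ha : |x₁| ≤ 2 * (S1 + S2) := by linarith
  have hma : |x₁| ≤ max |x₁| |x₂| := le_max_left _ _
  have hmb : |x₂| ≤ max |x₁| |x₂| := le_max_right _ _
  have hmnn : 0 ≤ max |x₁| |x₂| := le_trans (abs_nonneg x₁) hma
  have hS1ub : S1 ≤ 8 * max |x₁| |x₂| := by
    rw [hS1, div_le_iff₀ hD2pos]
    linarith [mul_le_mul h1xu hIub (abs_nonneg I) (by norm_num : (0:ℝ) ≤ 1.1),
      mul_le_mul_of_nonneg_left hD2lb hmnn]
  have hS2ub : S2 ≤ 8 * max |x₁| |x₂| := by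
    rw [hS2, div_le_iff₀ hD3pos]
    linarith [mul_nonneg (by linarith : (0:ℝ) ≤ 1.1 - (1 + x₁)) (abs_nonneg x₂),
      mul_le_mul_of_nonneg_left hD3lb hmnn]
  refine ⟨rfl, rfl, ?_, ?_⟩
  · rw [inv_mul_le_iff₀ (by norm_num : (0:ℝ) < 100)]
    refine le_trans (max_le ha (by linarith)) (by linarith)
  · linarith
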